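/- Let Ψ : [n] × [m] → ℝ≥0 and let φ be a signaling scheme. Fix a signal σ and an item j with φ(σ,j) > 0, and suppose μ(j) ∉ {h₁(σ), h₂(σ)} where μ(j) = argmax_i Ψ(i,j) and h₁(σ), h₂(σ) are the bidders realizing max and secondmax of i ↦ ∑_{j'} φ(σ,j')·Ψ(i,j'). Construct φ̂ by splitting σ into two signals σ', σ'' with φ̂(σ',j) = φ(σ,j), φ̂(σ',j') = 0 for j' ≠ j, and φ̂(σ'',j) = 0, φ̂(σ'',j') = φ(σ,j') for j' ≠ j. Then φ̂ is a valid signaling scheme and Rev(φ̂) ≥ Rev(φ). -/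

import Mathlib

open Finset

/-- The second-largest value of `f` (counting multiplicity): the supremum of
`min (f i) (f j)` over pairs of distinct indices. -/
noncomputable def secondmax {ι : Type*} [Fintype ι] (f : ι → ℝ) : ℝ :=
  sSup {x | ∃ i j : ι, i ≠ j ∧ x = min (f i) (f j)}

/-- A signaling scheme: nonnegative entries, and for each good `j` the signal
probabilities sum to one. -/
def IsScheme {S J : Type*} [Fintype S] (φ : S → J → ℝ) : Prop :=
  (∀ σ j, 0 ≤ φ σ j) ∧ ∀ j, ∑ σ, φ σ j = 1

/-- Revenue of a signaling scheme under normalized valuations `Ψ`. -/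
noncomputable def Rev {S : Type*} [Fintype S] {n : ℕ} {J : Type*} [Fintype J]
    (Ψ : Fin n → J → ℝ) (φ : S → J → ℝ) : ℝ :=
  ∑ σ, secondmax (fun i => ∑ j, φ σ j * Ψ i j)

/-- Splitting off an item `j` with `μ(j) ∉ {h₁(σ), h₂(σ)}` from signal `σ` into its own
signal yields a valid scheme with at least the same revenue. -/
lemma secondmax_bdd {ι : Type*} [Fintype ι] [Nonempty ι] (f : ι → ℝ) :
    BddAbove {x | ∃ i j : ι, i ≠ j ∧ x = min (f i) (f j)} := by
  refine ⟨Finset.univ.sup' univ_nonempty f, ?_⟩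
  rintro x ⟨i, k, _, rfl⟩
  exact le_trans (min_le_left _ _) (Finset.le_sup' f (mem_univ i))

lemma le_secondmax {ι : Type*} [Fintype ι] (f : ι → ℝ) (i k : ι) (h : i ≠ k) :
    min (f i) (f k) ≤ secondmax f := by
  have : Nonempty ι := ⟨i⟩
  exact le_csSup (secondmax_bdd f) ⟨i, k, h, rfl⟩

lemma secondmax_le {ι : Type*} [Fintype ι] (f : ι → ℝ) (a : ℝ)
    (i₀ k₀ : ι) (h₀ : i₀ ≠ k₀)
    (H : ∀ i k : ι, i ≠ k → min (f i) (f k) ≤ a) :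
    secondmax f ≤ a := by
  refine csSup_le ⟨_, i₀, k₀, h₀, rfl⟩ ?_
  rintro x ⟨i, k, hik, rfl⟩
  exact H i k hik

theorem stmt9 {n s m : ℕ} (hn : 2 ≤ n)
    (Ψ : Fin n → Fin m → ℝ) (hΨ : ∀ i j, 0 ≤ Ψ i j)
    (φ : Fin s → Fin m → ℝ) (hφ : IsScheme φ)
    (σ : Fin s) (j : Fin m) (hpos : 0 < φ σ j)
    (μ : Fin m → Fin n) (hμ : ∀ i, Ψ i j ≤ Ψ (μ j) j)
    (h₁ h₂ : Fin n) (hh : h₁ ≠ h₂)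
    (hmax : ∀ i, ∑ j', φ σ j' * Ψ i j' ≤ ∑ j', φ σ j' * Ψ h₁ j')
    (hsec : ∀ i, i ≠ h₁ → ∑ j', φ σ j' * Ψ i j' ≤ ∑ j', φ σ j' * Ψ h₂ j')
    (hμout : μ j ≠ h₁ ∧ μ j ≠ h₂) :
    IsScheme (fun (τ : Fin s ⊕ Unit) j' =>
      Sum.elim
        (fun τ₀ : Fin s => if τ₀ = σ then (if j' = j then φ σ j else 0) else φ τ₀ j')
        (fun _ : Unit => if j' = j then 0 else φ σ j') τ) ∧
    Rev Ψ φ ≤ Rev Ψ (fun (τ : Fin s ⊕ Unit) j' =>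
      Sum.elim
        (fun τ₀ : Fin s => if τ₀ = σ then (if j' = j then φ σ j else 0) else φ τ₀ j')
        (fun _ : Unit => if j' = j then 0 else φ σ j') τ) := by
  obtain ⟨hnn, hsum⟩ := hφ
  constructor
  · constructor
    · rintro (τ₀ | _) j' <;> simp only [Sum.elim_inl, Sum.elim_inr] <;>
        split_ifs <;> first | exact hnn _ _ | exact le_refl 0 | exact hnn _ _
    · intro j'
      rw [Fintype.sum_sum_type]
      simp only [Sum.elim_inl, Sum.elim_inr]
      by_cases hj : j' = j
      · have key : ∀ τ₀ : Fin s, (if τ₀ = σ then φ σ j else φ τ₀ j) = φ τ₀ j := by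
          intro τ₀; by_cases h : τ₀ = σ <;> simp [h]
        simp [hj, key, hsum j]
      · simp only [if_neg hj]
        have key : ∀ τ₀ : Fin s, (if τ₀ = σ then (0:ℝ) else φ τ₀ j')
            = φ τ₀ j' - (if τ₀ = σ then φ σ j' else 0) := by
          intro τ₀; by_cases h : τ₀ = σ <;> simp [h]
        rw [Finset.sum_congr rfl (fun τ₀ _ => key τ₀), Finset.sum_sub_distrib,
          Finset.sum_ite_eq' Finset.univ σ (fun _ => φ σ j'), hsum j']
        simp
  · set f : Fin n → ℝ := fun i => ∑ j', φ σ j' * Ψ i j' with hf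
    set g : Fin n → ℝ := fun i => φ σ j * Ψ i j with hg
    set h : Fin n → ℝ := fun i => ∑ j', (if j' = j then 0 else φ σ j') * Ψ i j' with hhdef
    have hgmax : ∀ i, g i ≤ g (μ j) := fun i =>
      mul_le_mul_of_nonneg_left (hμ i) hpos.le
    have gsum : ∀ i : Fin n, ∑ j', (if j' = j then φ σ j else 0) * Ψ i j' = g i := by
      intro i
      rw [Finset.sum_congr rfl (fun j' _ => by
        rw [ite_mul, zero_mul] :
        ∀ j' ∈ Finset.univ, (if j' = j then φ σ j else 0) * Ψ i j'
          = if j' = j then φ σ j * Ψ i j' else 0)]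
      simp [Finset.sum_ite_eq']
      rfl
    have feq : ∀ i, f i = g i + h i := by
      intro i
      have : ∀ j' : Fin m, φ σ j' * Ψ i j'
          = (if j' = j then φ σ j else 0) * Ψ i j' + (if j' = j then 0 else φ σ j') * Ψ i j' := by
        intro j'; by_cases hj : j' = j <;> simp [hj]
      rw [hf]
      simp only [this, Finset.sum_add_distrib, gsum i]
      rfl
    have A1 : g h₁ ≤ secondmax g := by
      have := le_secondmax g (μ j) h₁ hμout.1
      rwa [min_eq_right (hgmax h₁)] at this
    have A2 : g h₂ ≤ secondmax g := by
      have := le_secondmax g (μ j) h₂ hμout.2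
      rwa [min_eq_right (hgmax h₂)] at this
    have B : min (h h₁) (h h₂) ≤ secondmax h := le_secondmax h h₁ h₂ hh
    have C : secondmax f ≤ f h₂ := by
      refine secondmax_le f (f h₂) h₁ h₂ hh ?_
      intro i k hik
      rcases eq_or_ne i h₁ with rfl | hi
      · exact le_trans (min_le_right _ _) (hsec k (Ne.symm hik))
      · exact le_trans (min_le_left _ _) (hsec i hi)
    have key : secondmax f ≤ secondmax g + secondmax h := by
      rcases le_total (h h₁) (h h₂) with hc | hc
      · have : f h₂ ≤ f h₁ := hmax h₂
        have hB : h h₁ ≤ secondmax h := by rwa [min_eq_left hc] at B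
        have := feq h₁
        linarith
      · have hB : h h₂ ≤ secondmax h := by rwa [min_eq_right hc] at B
        have := feq h₂
        linarith
    rw [Rev, Rev, Fintype.sum_sum_type]
    simp only [Sum.elim_inl, Sum.elim_inr]
    have e1 : ∑ τ₀ : Fin s, secondmax (fun i => ∑ j', φ τ₀ j' * Ψ i j')
        = secondmax f + ∑ τ₀ ∈ Finset.univ.erase σ,
            secondmax (fun i => ∑ j', φ τ₀ j' * Ψ i j') :=
      (Finset.add_sum_erase _ _ (Finset.mem_univ σ)).symm
    have e2 : (∑ τ₀ : Fin s, secondmax (fun i => ∑ j',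
          (if τ₀ = σ then (if j' = j then φ σ j else 0) else φ τ₀ j') * Ψ i j'))
        = secondmax g + ∑ τ₀ ∈ Finset.univ.erase σ,
            secondmax (fun i => ∑ j', φ τ₀ j' * Ψ i j') := by
      rw [← Finset.add_sum_erase _ _ (Finset.mem_univ σ)]
      congr 1
      · simp only [if_pos rfl]
        congr 1
        funext i
        exact gsum i
      · refine Finset.sum_congr rfl fun τ₀ hτ => ?_
        have hne : τ₀ ≠ σ := Finset.ne_of_mem_erase hτ
        simp [hne]
    have e3 : (∑ _ : Unit, secondmax (fun i => ∑ j', (if j' = j then 0 else φ σ j') * Ψ i j'))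
        = secondmax h := by simp [hhdef]
    rw [e1, e2, e3]
    linarith
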